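/- arXiv:1506.04604 — 2 statements merged into one kernel-verified Lean document; each statement's English description precedes it below -/
import Mathlib

section
/- The bracket defined on the 8-dimensional space g of constrained triples (a, S⁺, S⁻) is well-defined (g is closed under it), is antisymmetric, and satisfies the Jacobi identity; hence g is an 8-dimensional complex Lie algebra (the derivation algebra Der(𝕊) of the sextonions). -/
open Matrix

abbrev V3 := Fin 3 → ℂ

def cross (A B : V3) : V3 := crossProduct A B

abbrev M3 := Matrix (Fin 3) (Fin 3) ℂ

/-- Elements of the matrix realization G of g₂: triples X = (a, A⁺, A⁻). -/
abbrev GC := M3 × V3 × V3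

/-- The product A⁺∘B⁻ := tr(A⁺B⁻)·I − 3·A⁺B⁻, with A⁺B⁻ the outer product. -/
noncomputable def circ (A B : V3) : M3 := (A ⬝ᵥ B) • (1 : M3) - (3 : ℂ) • vecMulVec A B

/-- The g₂ bracket on G:
[X,Y] = ([a,b] + A⁺∘B⁻ − B⁺∘A⁻, aB⁺ − bA⁺ + 2 A⁻×B⁻, A⁻b − B⁻a + 2 A⁺×B⁺). -/
noncomputable def gbr (X Y : GC) : GC :=
  ( X.1 * Y.1 - Y.1 * X.1 + circ X.2.1 Y.2.2 - circ Y.2.1 X.2.2,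
    X.1 *ᵥ Y.2.1 - Y.1 *ᵥ X.2.1 + (2 : ℂ) • cross X.2.2 Y.2.2,
    X.2.2 ᵥ* Y.1 - Y.2.2 ᵥ* X.1 + (2 : ℂ) • cross X.2.1 Y.2.1 )

/-- m′ : the matrix m with its (2,3)-entry (0-based: (1,2)) replaced by 0. -/
def prime (m : M3) : M3 := fun i j => if i = 1 ∧ j = 2 then 0 else m i j

/-- The constrained product S⁺∘′R⁻ := tr(S⁺R⁻)·I − 3·(S⁺R⁻)′. -/
noncomputable def circ' (A B : V3) : M3 :=
  (A ⬝ᵥ B) • (1 : M3) - (3 : ℂ) • prime (vecMulVec A B)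

/-- The bracket of the derivation algebra g = Der(𝕊) of the sextonions:
[(a,S⁺,S⁻),(b,R⁺,R⁻)] = ( ([a,b])′ + S⁺∘′R⁻ − R⁺∘′S⁻ ,
  aR⁺ − bS⁺ + 2 S⁻×R⁻ , S⁻b − R⁻a + 2 S⁺×R⁺ ). -/
noncomputable def gbr' (X Y : GC) : GC :=
  ( prime (X.1 * Y.1 - Y.1 * X.1) + circ' X.2.1 Y.2.2 - circ' Y.2.1 X.2.2,
    X.1 *ᵥ Y.2.1 - Y.1 *ᵥ X.2.1 + (2 : ℂ) • cross X.2.2 Y.2.2,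
    X.2.2 ᵥ* Y.1 - Y.2.2 ᵥ* X.1 + (2 : ℂ) • cross X.2.1 Y.2.1 )

/-- Membership in g = Der(𝕊):
a₁₂ = a₂₃ = a₃₁ = a₃₂ = 0 (1-based), tr a = 0, S⁺₃ = 0, S⁻₂ = 0. -/
def ing (X : GC) : Prop :=
  X.1 0 1 = 0 ∧ X.1 1 2 = 0 ∧ X.1 2 0 = 0 ∧ X.1 2 1 = 0 ∧ X.1.trace = 0 ∧
  X.2.1 2 = 0 ∧ X.2.2 1 = 0

/-- g = Der(𝕊) as a ℂ-submodule. -/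
noncomputable def gsub : Submodule ℂ GC where
  carrier := {X | ing X}
  add_mem' := by
    rintro X Y ⟨h1, h2, h3, h4, h5, h6, h7⟩ ⟨g1, g2, g3, g4, g5, g6, g7⟩
    refine ⟨?_, ?_, ?_, ?_, ?_, ?_, ?_⟩ <;>
      simp [Prod.fst_add, Prod.snd_add, Matrix.add_apply, Matrix.trace_add, Pi.add_apply, *]
  zero_mem' := by
    refine ⟨rfl, rfl, rfl, rfl, ?_, rfl, rfl⟩
    simp
  smul_mem' := by
    rintro c X ⟨h1, h2, h3, h4, h5, h6, h7⟩
    refine ⟨?_, ?_, ?_, ?_, ?_, ?_, ?_⟩ <;>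
      simp [Prod.smul_fst, Prod.smul_snd, Matrix.smul_apply, Matrix.trace_smul, Pi.smul_apply, *]

section aux

@[simp] lemma look0 (a0 a1 a2 a3 a4 a5 a6 a7 : ℂ) : (![a0,a1,a2,a3,a4,a5,a6,a7] : Fin 8 → ℂ) 0 = a0 := rfl
@[simp] lemma look1 (a0 a1 a2 a3 a4 a5 a6 a7 : ℂ) : (![a0,a1,a2,a3,a4,a5,a6,a7] : Fin 8 → ℂ) 1 = a1 := rfl
@[simp] lemma look2 (a0 a1 a2 a3 a4 a5 a6 a7 : ℂ) : (![a0,a1,a2,a3,a4,a5,a6,a7] : Fin 8 → ℂ) 2 = a2 := rfl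
@[simp] lemma look3 (a0 a1 a2 a3 a4 a5 a6 a7 : ℂ) : (![a0,a1,a2,a3,a4,a5,a6,a7] : Fin 8 → ℂ) 3 = a3 := rfl
@[simp] lemma look4 (a0 a1 a2 a3 a4 a5 a6 a7 : ℂ) : (![a0,a1,a2,a3,a4,a5,a6,a7] : Fin 8 → ℂ) 4 = a4 := rfl
@[simp] lemma look5 (a0 a1 a2 a3 a4 a5 a6 a7 : ℂ) : (![a0,a1,a2,a3,a4,a5,a6,a7] : Fin 8 → ℂ) 5 = a5 := rfl
@[simp] lemma look6 (a0 a1 a2 a3 a4 a5 a6 a7 : ℂ) : (![a0,a1,a2,a3,a4,a5,a6,a7] : Fin 8 → ℂ) 6 = a6 := rfl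
@[simp] lemma look7 (a0 a1 a2 a3 a4 a5 a6 a7 : ℂ) : (![a0,a1,a2,a3,a4,a5,a6,a7] : Fin 8 → ℂ) 7 = a7 := rfl

/-- Parametrization of g by 8 coordinates. -/
def par (v : Fin 8 → ℂ) : GC :=
  (!![v 0, 0, v 3; v 1, v 2, 0; 0, 0, -(v 0 + v 2)], ![v 4, v 5, 0], ![v 6, 0, v 7])

lemma ing_iff (X : GC) : ing X ↔ ∃ v, par v = X := by
  constructor
  · rintro ⟨h1, h2, h3, h4, h5, h6, h7⟩
    refine ⟨![X.1 0 0, X.1 1 0, X.1 1 1, X.1 0 2, X.2.1 0, X.2.1 1, X.2.2 0, X.2.2 2], ?_⟩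
    rw [Matrix.trace_fin_three] at h5
    refine Prod.ext ?_ (Prod.ext ?_ ?_)
    · ext i j
      fin_cases i <;> fin_cases j <;> simp [par, h1, h2, h3, h4] <;> linear_combination -h5
    · funext i; fin_cases i <;> simp [par, h6]
    · funext i; fin_cases i <;> simp [par, h7]
  · rintro ⟨v, rfl⟩
    refine ⟨rfl, rfl, rfl, rfl, ?_, rfl, rfl⟩
    simp [par, Matrix.trace_fin_three]

/-- Coordinates of the bracket of two parametrized elements. -/
def wbr (x y : Fin 8 → ℂ) : Fin 8 → ℂ :=
  ![ -2*x 4*y 6 + 2*x 6*y 4,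
     -(x 0*y 1) + x 1*y 0 - x 1*y 2 + x 2*y 1 - 3*x 5*y 6 + 3*x 6*y 5,
     x 4*y 6 - x 6*y 4,
     2*x 0*y 3 + x 2*y 3 - 2*x 3*y 0 - x 3*y 2 - 3*x 4*y 7 + 3*x 7*y 4,
     x 0*y 4 - x 4*y 0,
     x 1*y 4 + x 2*y 5 - x 4*y 1 - x 5*y 2 - 2*x 6*y 7 + 2*x 7*y 6,
     -(x 0*y 6) + x 6*y 0,
     x 0*y 7 + x 2*y 7 - x 3*y 6 + 2*x 4*y 5 - 2*x 5*y 4 + x 6*y 3 - x 7*y 0 - x 7*y 2 ]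

set_option maxHeartbeats 2000000 in
lemma gbr'_par (x y : Fin 8 → ℂ) : gbr' (par x) (par y) = par (wbr x y) := by
  refine Prod.ext ?_ (Prod.ext ?_ ?_)
  · ext i j
    fin_cases i <;> fin_cases j <;>
      simp [gbr', circ', prime, cross, cross_apply, vecMulVec_apply, mul_apply,
        dotProduct, Fin.sum_univ_three, Matrix.one_apply, par, wbr] <;> ring
  · funext i
    fin_cases i <;>
      simp [gbr', cross, cross_apply, mulVec, vecMul, dotProduct, Fin.sum_univ_three,
        par, wbr, Matrix.vecHead, Matrix.vecTail, Function.comp] <;> ring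
  · funext i
    fin_cases i <;>
      simp [gbr', cross, cross_apply, mulVec, vecMul, dotProduct, Fin.sum_univ_three,
        par, wbr, Matrix.vecHead, Matrix.vecTail, Function.comp] <;> ring

lemma par_add (u v : Fin 8 → ℂ) : par (u + v) = par u + par v := by
  refine Prod.ext ?_ (Prod.ext ?_ ?_)
  · ext i j; fin_cases i <;> fin_cases j <;> simp [par] <;> ring
  · funext i; fin_cases i <;> simp [par, Matrix.vecHead, Matrix.vecTail]
  · funext i; fin_cases i <;> simp [par, Matrix.vecHead, Matrix.vecTail]

lemma par_smul (c : ℂ) (v : Fin 8 → ℂ) : par (c • v) = c • par v := by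
  refine Prod.ext ?_ (Prod.ext ?_ ?_)
  · ext i j; fin_cases i <;> fin_cases j <;> simp [par] <;> ring
  · funext i; fin_cases i <;> simp [par, Matrix.vecHead, Matrix.vecTail]
  · funext i; fin_cases i <;> simp [par, Matrix.vecHead, Matrix.vecTail]

lemma par_zero : par 0 = 0 := by
  refine Prod.ext ?_ (Prod.ext ?_ ?_)
  · ext i j; fin_cases i <;> fin_cases j <;> simp [par, Matrix.vecHead, Matrix.vecTail]
  · funext i; fin_cases i <;> simp [par, Matrix.vecHead, Matrix.vecTail]
  · funext i; fin_cases i <;> simp [par, Matrix.vecHead, Matrix.vecTail]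

lemma wbr_jac (x y z : Fin 8 → ℂ) :
    wbr (wbr x y) z + wbr (wbr y z) x + wbr (wbr z x) y = 0 := by
  funext i; fin_cases i <;> simp [wbr] <;> ring

lemma antisym' (X Y : GC) : gbr' X Y = - gbr' Y X := by
  refine Prod.ext ?_ (Prod.ext ?_ ?_)
  · ext i j; fin_cases i <;> fin_cases j <;>
      simp [gbr', circ', prime, cross, cross_apply, vecMulVec_apply, mul_apply,
        dotProduct, Fin.sum_univ_three, Matrix.one_apply, mulVec, vecMul] <;> ring
  · funext i; fin_cases i <;>
      simp [gbr', cross, cross_apply, mulVec, vecMul, dotProduct, Fin.sum_univ_three] <;> ring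
  · funext i; fin_cases i <;>
      simp [gbr', cross, cross_apply, mulVec, vecMul, dotProduct, Fin.sum_univ_three] <;> ring

noncomputable def parL : (Fin 8 → ℂ) →ₗ[ℂ] GC where
  toFun := par
  map_add' := par_add
  map_smul' := par_smul

lemma parL_inj : Function.Injective parL := by
  have h : Function.LeftInverse
      (fun X : GC => (![X.1 0 0, X.1 1 0, X.1 1 1, X.1 0 2, X.2.1 0, X.2.1 1, X.2.2 0, X.2.2 2] :
        Fin 8 → ℂ)) parL := by
    intro v
    funext i; fin_cases i <;> simp [parL, par]
  exact h.injective

lemma gsub_eq_range : gsub = LinearMap.range parL := by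
  ext X
  constructor
  · intro h
    obtain ⟨v, hv⟩ := (ing_iff X).mp h
    exact ⟨v, hv⟩
  · rintro ⟨v, rfl⟩
    exact (ing_iff _).mpr ⟨v, rfl⟩

end aux


/-- the bracket on the 8-dimensional space g of constrained triples
(a, S⁺, S⁻) is well-defined (g is closed under it), antisymmetric and satisfies the
Jacobi identity; hence g is an 8-dimensional complex Lie algebra (Der(𝕊)). -/
theorem derS_is_lie_algebra :
    (∀ X Y : GC, ing X → ing Y → ing (gbr' X Y)) ∧
    (∀ X Y : GC, ing X → ing Y → gbr' X Y = - gbr' Y X) ∧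
    (∀ X Y Z : GC, ing X → ing Y → ing Z →
      gbr' (gbr' X Y) Z + gbr' (gbr' Y Z) X + gbr' (gbr' Z X) Y = 0) ∧
    Module.finrank ℂ gsub = 8 := by
  refine ⟨?_, ?_, ?_, ?_⟩
  · intro X Y hX hY
    obtain ⟨x, rfl⟩ := (ing_iff X).mp hX
    obtain ⟨y, rfl⟩ := (ing_iff Y).mp hY
    rw [gbr'_par]
    exact (ing_iff _).mpr ⟨_, rfl⟩
  · intro X Y _ _
    exact antisym' X Y
  · intro X Y Z hX hY hZ
    obtain ⟨x, rfl⟩ := (ing_iff X).mp hX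
    obtain ⟨y, rfl⟩ := (ing_iff Y).mp hY
    obtain ⟨z, rfl⟩ := (ing_iff Z).mp hZ
    rw [gbr'_par, gbr'_par, gbr'_par, gbr'_par, gbr'_par, gbr'_par,
      ← par_add, ← par_add, wbr_jac, par_zero]
  · rw [gsub_eq_range, LinearMap.finrank_range_of_inj parL_inj]
    exact Module.finrank_fin_fun ℂ
end

section
/- Let P ⊆ G be the 9-dimensional subspace of triples (a, A⁺, A⁻) with a₁₂ = a₃₁ = a₃₂ = 0, A⁺₃ = 0 and A⁻₂ = 0. Then P is closed under the bracket of G (so P is a Lie subalgebra), and the linear map π : P → g which replaces the (2,3)-entry of a by 0 (and leaves A⁺, A⁻ unchanged) is a surjective Lie algebra homomorphism from P onto g whose kernel is the one-dimensional span of (E₂₃, 0, 0). -/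
open Matrix

/-- Membership in P ⊆ G: a ∈ sl₃ with a₁₂ = a₃₁ = a₃₂ = 0 (1-based), A⁺₃ = 0, A⁻₂ = 0. -/
def inP (X : GC) : Prop :=
  X.1.trace = 0 ∧ X.1 0 1 = 0 ∧ X.1 2 0 = 0 ∧ X.1 2 1 = 0 ∧ X.2.1 2 = 0 ∧ X.2.2 1 = 0

/-- π : P → g, replacing the (2,3)-entry of a by 0. -/
def piP (X : GC) : GC := (prime X.1, X.2.1, X.2.2)

set_option maxHeartbeats 2000000 in
/-- P is closed under the bracket of G (hence a Lie subalgebra), and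
π : P → g is a surjective Lie algebra homomorphism onto g with one-dimensional
kernel spanned by (E₂₃, 0, 0). -/
theorem P_projects_onto_derS :
    (∀ X Y : GC, inP X → inP Y → inP (gbr X Y)) ∧
    (∀ X : GC, inP X → ing (piP X)) ∧
    (∀ X Y : GC, inP X → inP Y → piP (gbr X Y) = gbr' (piP X) (piP Y)) ∧
    (∀ Y : GC, ing Y → ∃ X : GC, inP X ∧ piP X = Y) ∧
    (∀ X : GC, inP X →
      (piP X = 0 ↔ ∃ c : ℂ, X = (c • Matrix.single 1 2 (1 : ℂ), 0, 0))) := by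
  have fin3 : ∀ i : Fin 3, i = 0 ∨ i = 1 ∨ i = 2 := by decide
  refine ⟨?_, ?_, ?_, ?_, ?_⟩
  · rintro ⟨a, A, A'⟩ ⟨b, B, B'⟩ ⟨h1,h2,h3,h4,h5,h6⟩ ⟨g1,g2,g3,g4,g5,g6⟩
    dsimp only at h1 h2 h3 h4 h5 h6 g1 g2 g3 g4 g5 g6
    refine ⟨?_, ?_, ?_, ?_, ?_, ?_⟩ <;>
      simp [gbr, circ, cross, crossProduct, Matrix.mul_apply, Matrix.mulVec, Matrix.vecMul,
        dotProduct, Fin.sum_univ_three, Matrix.vecMulVec_apply, Matrix.trace_fin_three,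
        Matrix.one_apply, Matrix.vecHead, Matrix.vecTail, Function.comp,
        Fin.succ_zero_eq_one, Fin.succ_one_eq_two,
        h2,h3,h4,h5,h6,g2,g3,g4,g5,g6] <;> ring
  · rintro ⟨a, A, A'⟩ ⟨h1,h2,h3,h4,h5,h6⟩
    dsimp only at h1 h2 h3 h4 h5 h6
    exact ⟨by simp [piP, prime, h2], by simp [piP, prime], by simp [piP, prime, h3],
      by simp [piP, prime, h4],
      by simp only [Matrix.trace_fin_three] at h1
         simp [piP, prime, Matrix.trace_fin_three]
         linear_combination h1, h5, h6⟩
  · rintro ⟨a, A, A'⟩ ⟨b, B, B'⟩ ⟨h1,h2,h3,h4,h5,h6⟩ ⟨g1,g2,g3,g4,g5,g6⟩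
    dsimp only at h1 h2 h3 h4 h5 h6 g1 g2 g3 g4 g5 g6
    refine Prod.ext ?_ (Prod.ext ?_ ?_)
    · funext i j
      rcases fin3 i with rfl | rfl | rfl <;> rcases fin3 j with rfl | rfl | rfl <;>
        simp [piP, gbr, gbr', prime, circ, circ', Matrix.mul_apply, dotProduct,
          Fin.sum_univ_three, Matrix.vecMulVec_apply, Matrix.one_apply,
          h2,h3,h4,h5,h6,g2,g3,g4,g5,g6] <;> ring
    · funext i
      rcases fin3 i with rfl | rfl | rfl <;>
        simp [piP, gbr, gbr', prime, cross, crossProduct, Matrix.mulVec, dotProduct,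
          Matrix.vecHead, Matrix.vecTail, Function.comp, Fin.succ_zero_eq_one, Fin.succ_one_eq_two,
          Fin.sum_univ_three, h5, g5] <;> ring
    · funext i
      rcases fin3 i with rfl | rfl | rfl <;>
        simp [piP, gbr, gbr', prime, cross, crossProduct, Matrix.vecMul, dotProduct,
          Matrix.vecHead, Matrix.vecTail, Function.comp, Fin.succ_zero_eq_one, Fin.succ_one_eq_two,
          Fin.sum_univ_three, h6, g6] <;> ring
  · rintro ⟨a, S, S'⟩ ⟨h1,h2,h3,h4,h5,h6,h7⟩
    dsimp only at h1 h2 h3 h4 h5 h6 h7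
    refine ⟨(a, S, S'), ⟨h5, h1, h3, h4, h6, h7⟩, ?_⟩
    simp only [piP]
    congr 1
    funext i j
    rcases fin3 i with rfl | rfl | rfl <;> rcases fin3 j with rfl | rfl | rfl <;>
      simp [prime, h2]
  · intro X hX
    obtain ⟨h1,h2,h3,h4,h5,h6⟩ := hX
    constructor
    · intro h
      have h0 : prime X.1 = 0 ∧ X.2.1 = 0 ∧ X.2.2 = 0 := by
        simpa [piP, Prod.ext_iff] using h
      have ha : ∀ i j, ¬(i = 1 ∧ j = 2) → X.1 i j = 0 := by
        intro i j hij
        have := congrFun (congrFun h0.1 i) j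
        simpa [prime, hij] using this
      refine ⟨X.1 1 2, Prod.ext ?_ (Prod.ext h0.2.1 h0.2.2)⟩
      funext i j
      rcases fin3 i with rfl | rfl | rfl <;> rcases fin3 j with rfl | rfl | rfl <;>
        simp [Matrix.single, Matrix.smul_apply, smul_eq_mul] <;>
        exact ha _ _ (by decide)
    · rintro ⟨c, rfl⟩
      refine Prod.ext ?_ rfl
      funext i j
      rcases fin3 i with rfl | rfl | rfl <;> rcases fin3 j with rfl | rfl | rfl <;>
        simp [piP, prime, Matrix.single, Matrix.smul_apply]
end
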